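/- For all real x with 0 < x < π, cot(x) = 1/x − ∑_{m=1}^∞ 2^{2m}·|B_{2m}|·x^{2m−1}/(2m)!, i.e., the Laurent-type expansion of the cotangent in terms of Bernoulli numbers holds and the series converges for 0 < x < π. -/

import Mathlib

open Real Filter Finset Topology

/-- Mittag-Leffler expansion of cotangent. -/
theorem cot_mittag (x : ℝ) (hx0 : 0 < x) (hxpi : x < Real.pi) :
    HasSum (fun j : ℕ => 2 * x / (((j : ℝ) + 1) ^ 2 * Real.pi ^ 2 - x ^ 2))
      (1 / x - Real.cot x) := by
  have hpi : (0:ℝ) < π := Real.pi_pos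
  set t : ℝ := x / π with ht_def
  have ht0 : 0 < t := div_pos hx0 hpi
  have ht1 : t < 1 := (div_lt_one hpi).2 hxpi
  set b : ℝ := (t + 1) / 2 with hb_def
  have htb : t < b := by rw [hb_def]; linarith
  have hb1 : b < 1 := by rw [hb_def]; linarith
  have hb0 : 0 < b := lt_trans ht0 htb
  set s : Set ℝ := Set.Ioo (0:ℝ) b with hs_def
  have hts : t ∈ s := ⟨ht0, htb⟩
  -- the derivative summands
  set d : ℕ → ℝ → ℝ := fun j y => -(2 * y / (((j:ℝ) + 1) ^ 2 - y ^ 2)) with hd_def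
  set u : ℕ → ℝ := fun j => (2 / (1 - b ^ 2)) * (1 / ((j:ℝ) + 1) ^ 2) with hu_def
  have hb2 : (0:ℝ) < 1 - b ^ 2 := by nlinarith
  have hu : Summable u := by
    apply Summable.mul_left
    have h2 : Summable (fun n : ℕ => 1 / (n:ℝ) ^ 2) :=
      summable_one_div_nat_pow.2 (by norm_num)
    have := (summable_nat_add_iff 1).2 h2
    simpa using this
  -- denominator bounds
  have hden : ∀ (j : ℕ), ∀ y ∈ s, (1 - b ^ 2) * ((j:ℝ) + 1) ^ 2 ≤ ((j:ℝ)+1)^2 - y^2 := by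
    intro j y hy
    have hj1 : (1:ℝ) ≤ ((j:ℝ)+1) := by
      have : (0:ℝ) ≤ (j:ℝ) := Nat.cast_nonneg j
      linarith
    have hy2 : y ^ 2 ≤ b ^ 2 := by
      have h1 := hy.1; have h2 := hy.2; nlinarith
    have hj2 : (1:ℝ) ≤ ((j:ℝ)+1)^2 := by nlinarith
    have hbj : b^2 * 1 ≤ b^2 * ((j:ℝ)+1)^2 := by
      apply mul_le_mul_of_nonneg_left hj2 (sq_nonneg b)
    nlinarith
  have hdenpos : ∀ (j : ℕ), ∀ y ∈ s, (0:ℝ) < ((j:ℝ)+1)^2 - y^2 := by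
    intro j y hy
    refine lt_of_lt_of_le ?_ (hden j y hy)
    positivity
  have hbound : ∀ (j : ℕ), ∀ y ∈ s, ‖d j y‖ ≤ u j := by
    intro j y hy
    have h1 : (0:ℝ) < ((j:ℝ)+1)^2 - y^2 := hdenpos j y hy
    have hy0 : 0 < y := hy.1
    rw [hd_def]
    simp only [norm_neg, Real.norm_eq_abs]
    rw [abs_of_nonneg (by positivity)]
    rw [hu_def]
    have hle : 2 * y ≤ 2 := by nlinarith [hy.2, hb1]
    calc 2 * y / (((j:ℝ)+1)^2 - y^2) ≤ 2 / ((1 - b^2) * ((j:ℝ)+1)^2) := by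
          exact div_le_div₀ (by norm_num) hle (by positivity) (hden j y hy)
      _ = (2 / (1 - b ^ 2)) * (1 / ((j:ℝ) + 1) ^ 2) := by
          rw [mul_one_div, div_div]
  -- uniform convergence of derivative partial sums
  have hf' : TendstoUniformlyOn (fun n y => ∑ j ∈ Finset.range n, d j y)
      (fun y => ∑' j, d j y) atTop s :=
    tendstoUniformlyOn_tsum_nat hu (fun j y hy => hbound j y hy)
  -- each partial sum is differentiable with the right derivative
  have hderiv : ∀ n : ℕ, ∀ y ∈ s, HasDerivAt
      (fun z => ∑ j ∈ Finset.range n, Real.log (1 - z ^ 2 / ((j:ℝ) + 1) ^ 2))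
      (∑ j ∈ Finset.range n, d j y) y := by
    intro n y hy
    apply HasDerivAt.fun_sum
    intro j _
    have hc : ((j:ℝ) + 1) ^ 2 ≠ 0 := by positivity
    have h1 : HasDerivAt (fun z : ℝ => 1 - z ^ 2 / ((j:ℝ) + 1) ^ 2)
        (-(2 * y / ((j:ℝ) + 1) ^ 2)) y := by
      have := ((hasDerivAt_pow 2 y).div_const (((j:ℝ) + 1) ^ 2)).const_sub 1
      convert this using 1
      · rfl
      · rfl
      ring
    have hne : 1 - y ^ 2 / ((j:ℝ) + 1) ^ 2 ≠ 0 := by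
      have h2 := hdenpos j y hy
      have hc : (0:ℝ) < ((j:ℝ) + 1) ^ 2 := by positivity
      have : 0 < 1 - y ^ 2 / ((j:ℝ) + 1) ^ 2 := by
        rw [sub_pos, div_lt_one hc]; linarith
      exact this.ne'
    have := h1.log hne
    convert this using 1
    · rfl
    · rfl
    rw [hd_def]
    have h2 := hdenpos j y hy
    field_simp
  -- pointwise convergence to log(sin(π y)) - log(π y)
  have hpt : ∀ y ∈ s, Tendsto (fun n => ∑ j ∈ Finset.range n, Real.log (1 - y ^ 2 / ((j:ℝ) + 1) ^ 2))
      atTop (𝓝 (Real.log (Real.sin (π * y)) - Real.log (π * y))) := by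
    intro y hy
    have hy0 : 0 < y := hy.1
    have hy1 : y < 1 := lt_trans hy.2 hb1
    have hsinpos : 0 < Real.sin (π * y) :=
      Real.sin_pos_of_pos_of_lt_pi (by positivity) (by nlinarith)
    have hfacpos : ∀ j : ℕ, 0 < 1 - y ^ 2 / ((j:ℝ) + 1) ^ 2 := by
      intro j
      have h2 := hdenpos j y hy
      have hc : (0:ℝ) < ((j:ℝ) + 1) ^ 2 := by positivity
      rw [sub_pos, div_lt_one hc]
      linarith
    have hP := Real.tendsto_euler_sin_prod y
    have hlog := ((Real.continuousAt_log hsinpos.ne').tendsto).comp hP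
    have heq : ∀ n : ℕ, Real.log (π * y * ∏ j ∈ Finset.range n, (1 - y ^ 2 / ((j:ℝ) + 1) ^ 2))
        = Real.log (π * y) + ∑ j ∈ Finset.range n, Real.log (1 - y ^ 2 / ((j:ℝ) + 1) ^ 2) := by
      intro n
      rw [Real.log_mul (by positivity) ?_, Real.log_prod]
      · intro j _; exact (hfacpos j).ne'
      · exact (Finset.prod_pos (fun j _ => hfacpos j)).ne'
    simp only [Function.comp_def, heq] at hlog
    have := hlog.sub_const (Real.log (π * y))
    simpa using this
  -- apply the derivative-of-uniform-limit theorem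
  have hmain : HasDerivAt (fun y => Real.log (Real.sin (π * y)) - Real.log (π * y))
      (∑' j, d j t) t :=
    hasDerivAt_of_tendstoUniformlyOn isOpen_Ioo hf'
      (Filter.Eventually.of_forall hderiv) hpt hts
  -- compute the derivative directly
  have hpt2 : π * t = x := by
    rw [ht_def]; field_simp
  have hsinpos : 0 < Real.sin (π * t) := by
    rw [hpt2]; exact Real.sin_pos_of_pos_of_lt_pi hx0 hxpi
  have hlin : HasDerivAt (fun y : ℝ => π * y) π t := by
    simpa using (hasDerivAt_id t).const_mul π
  have hg1 : HasDerivAt (fun y => Real.log (Real.sin (π * y)))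
      (Real.cos (π * t) * π / Real.sin (π * t)) t := by
    have hsin : HasDerivAt (fun y : ℝ => Real.sin (π * y)) (Real.cos (π * t) * π) t :=
      (Real.hasDerivAt_sin (π * t)).comp t hlin
    exact hsin.log hsinpos.ne'
  have hg2 : HasDerivAt (fun y => Real.log (π * y)) (π / (π * t)) t := hlin.log (by positivity : (0:ℝ) < π * t).ne'
  have hdirect := hg1.sub hg2
  have hEq : (∑' j, d j t) = Real.cos (π * t) * π / Real.sin (π * t) - π / (π * t) :=
    hmain.unique hdirect
  -- summability of d · t
  have hsumd : Summable (fun j => d j t) :=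
    Summable.of_norm_bounded hu (fun j => hbound j t hts)
  have hds : HasSum (fun j => d j t) (Real.cos (π * t) * π / Real.sin (π * t) - π / (π * t)) := by
    rw [← hEq]; exact hsumd.hasSum
  -- translate back to x
  have hcot : Real.cos (π * t) * π / Real.sin (π * t) - π / (π * t) = π * Real.cot x - π / x := by
    rw [hpt2, Real.cot_eq_cos_div_sin]; ring
  rw [hcot] at hds
  have hds2 := hds.neg.mul_left (π⁻¹)
  have hfinal : HasSum (fun j => π⁻¹ * -(d j t)) (π⁻¹ * -(π * Real.cot x - π / x)) := by
    simpa using hds2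
  have hterm : (fun j : ℕ => π⁻¹ * -(d j t)) =
      (fun j : ℕ => 2 * x / (((j : ℝ) + 1) ^ 2 * π ^ 2 - x ^ 2)) := by
    funext j
    rw [hd_def]
    simp only [neg_neg]
    have h2 := hdenpos j t hts
    have hq : ((j:ℝ)+1)^2 * π^2 - x^2 = π^2 * (((j:ℝ)+1)^2 - t^2) := by
      rw [ht_def]; field_simp
    rw [hq, ← hpt2]
    field_simp
  have hval : π⁻¹ * -(π * Real.cot x - π / x) = 1 / x - Real.cot x := by
    field_simp [Real.pi_ne_zero]
    ring
  rw [hterm, hval] at hfinal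
  exact hfinal

/-- For `0 < x < π`, the Laurent-type expansion
`cot(x) = 1/x − ∑_{m=1}^∞ 2^{2m}·|B_{2m}|·x^{2m−1}/(2m)!` holds, the series converging. -/
theorem cot_laurent (x : ℝ) (hx0 : 0 < x) (hxpi : x < Real.pi) :
    HasSum
      (fun m : ℕ =>
        2 ^ (2 * (m + 1)) * |(bernoulli (2 * (m + 1)) : ℝ)| *
          x ^ (2 * (m + 1) - 1) / (Nat.factorial (2 * (m + 1))))
      (1 / x - Real.cot x) := by
  have hpi : (0:ℝ) < π := Real.pi_pos
  set T : ℕ → ℝ := fun m =>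
    2 ^ (2 * (m + 1)) * |(bernoulli (2 * (m + 1)) : ℝ)| *
      x ^ (2 * (m + 1) - 1) / (Nat.factorial (2 * (m + 1))) with hT_def
  set q : ℕ → ℝ := fun j => ((j:ℝ) + 1) ^ 2 * π ^ 2 with hq_def
  have hqpos : ∀ j, (0:ℝ) < q j := fun j => by rw [hq_def]; positivity
  have hxq : ∀ j, x ^ 2 < q j := by
    intro j
    have hj1 : (1:ℝ) ≤ ((j:ℝ)+1) := by
      have : (0:ℝ) ≤ (j:ℝ) := Nat.cast_nonneg j
      linarith
    simp only [hq_def]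
    have hj2 : (1:ℝ) ≤ ((j:ℝ)+1)^2 := by nlinarith
    have h3 : π^2 * 1 ≤ π^2 * ((j:ℝ)+1)^2 := mul_le_mul_of_nonneg_left hj2 (sq_nonneg π)
    nlinarith
  have hr : ∀ j, x ^ 2 / q j < 1 := fun j => (div_lt_one (hqpos j)).2 (hxq j)
  set f : ℕ × ℕ → ℝ := fun p => (2 * x / q p.2) * ((x ^ 2 / q p.2) ^ p.1) with hf_def
  have hfpos : ∀ p, 0 ≤ f p := by
    intro p; rw [hf_def]
    have := hqpos p.2
    positivity
  -- fiber over j : geometric series in m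
  have hfiberj : ∀ j : ℕ, HasSum (fun m => f (m, j)) (2 * x / (q j - x ^ 2)) := by
    intro j
    have hg := (hasSum_geometric_of_lt_one (by positivity : (0:ℝ) ≤ x ^ 2 / q j) (hr j)).mul_left
      (2 * x / q j)
    convert hg using 1
    · rfl
    have h1 : (0:ℝ) < q j - x^2 := by have := hxq j; linarith
    have hne : q j ≠ 0 := (hqpos j).ne'
    have hsub : (1 : ℝ) - x^2 / q j ≠ 0 := by
      rw [sub_ne_zero]; exact fun h => (hr j).ne h.symm
    field_simp
  -- fiber over m : zeta values
  have hfiberm : ∀ m : ℕ, HasSum (fun j => f (m, j)) (T m) := by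
    intro m
    have hk : m + 1 ≠ 0 := Nat.succ_ne_zero m
    have hZ := hasSum_zeta_nat hk
    set Z : ℝ := (-1 : ℝ) ^ (m + 1 + 1) * (2 : ℝ) ^ (2 * (m + 1) - 1) * π ^ (2 * (m + 1)) *
        bernoulli (2 * (m + 1)) / (Nat.factorial (2 * (m + 1))) with hZ_def
    have hZ1 : HasSum (fun j : ℕ => 1 / ((j:ℝ) + 1) ^ (2 * (m + 1))) Z := by
      have h0 : (1:ℝ) / ((0:ℕ):ℝ) ^ (2 * (m + 1)) = 0 := by
        norm_num
      have := (hasSum_nat_add_iff' (f := fun n : ℕ => 1 / ((n:ℝ)) ^ (2 * (m + 1))) 1).mpr hZ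
      simp only [Finset.range_one, Finset.sum_singleton, h0, sub_zero] at this
      convert this using 2 with j
      · rfl
      push_cast
      ring
    have hZpos : 0 < Z := by
      have h1 : (1:ℝ) / ((1:ℕ):ℝ) ^ (2 * (m + 1)) ≤ Z :=
        le_hasSum hZ 1 (fun i _ => by positivity)
      simp only [Nat.cast_one, one_pow, div_one] at h1
      linarith
    set A : ℝ := (-1 : ℝ) ^ (m + 1 + 1) * (bernoulli (2 * (m + 1)) : ℝ) with hA_def
    have hApos : 0 < A := by
      have hc : (0:ℝ) < (2 : ℝ) ^ (2 * (m + 1) - 1) * π ^ (2 * (m + 1)) / (Nat.factorial (2 * (m + 1))) := by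
        positivity
      have hZv : Z = A * ((2 : ℝ) ^ (2 * (m + 1) - 1) * π ^ (2 * (m + 1)) / (Nat.factorial (2 * (m + 1)))) := by
        rw [hZ_def, hA_def]; ring
      nlinarith
    have hB : |(bernoulli (2 * (m + 1)) : ℝ)| = A := by
      rw [← abs_of_pos hApos, hA_def, abs_mul, abs_pow, abs_neg, abs_one, one_pow, one_mul]
    have hC := hZ1.mul_left (2 * x ^ (2 * m + 1) / π ^ (2 * (m + 1)))
    convert hC using 1
    · rfl
    · funext j
      have hj : ((j:ℝ) + 1) ≠ 0 := by positivity
      have hqm : q j = ((j:ℝ)+1)^2 * π^2 := by rw [hq_def]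
      show 2 * x / q j * (x ^ 2 / q j) ^ m = _
      rw [hqm, div_pow, ← pow_mul, mul_pow, ← pow_mul, ← pow_mul]
      have h2m : 2*(m+1) = 2*m + 2 := by omega
      rw [h2m, pow_add, pow_add, pow_add]
      field_simp
    · show 2 ^ (2 * (m + 1)) * |(bernoulli (2 * (m + 1)) : ℝ)| *
          x ^ (2 * (m + 1) - 1) / (Nat.factorial (2 * (m + 1))) = _
      rw [hZ_def, hB, hA_def]
      have he : 2 * (m + 1) - 1 = 2 * m + 1 := by omega
      have h2 : ((2:ℝ)) ^ (2 * m + 1) = 2 ^ (2 * (m + 1)) / 2 := by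
        rw [(by omega : 2 * (m + 1) = (2 * m + 1) + 1)]
        ring
      rw [he, h2]
      have hfac : ((Nat.factorial (2 * (m + 1))) : ℝ) ≠ 0 := by positivity
      field_simp
  -- summability of the double series
  set F : ℕ × ℕ → ℝ := fun p => f (p.2, p.1) with hF_def
  have hml := cot_mittag x hx0 hxpi
  have hF0 : 0 ≤ F := fun p => hfpos p.swap
  have hFsum : Summable F := by
    rw [summable_prod_of_nonneg hF0]
    constructor
    · intro j; exact (hfiberj j).summable
    · apply Summable.congr (hml.summable)
      intro j
      rw [← (hfiberj j).tsum_eq]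
  have hfsum : Summable f := by
    have := (Equiv.prodComm ℕ ℕ).summable_iff.mpr hFsum
    exact this
  have hHS : HasSum f (∑' p, f p) := hfsum.hasSum
  have hHSF : HasSum F (∑' p, f p) := by
    have := (Equiv.prodComm ℕ ℕ).hasSum_iff.mpr hHS
    exact this
  have hw : HasSum (fun j => 2 * x / (q j - x ^ 2)) (∑' p, f p) :=
    hHSF.prod_fiberwise (fun j => hfiberj j)
  have hSval : (∑' p, f p) = 1 / x - Real.cot x := hw.unique hml
  have hT : HasSum T (∑' p, f p) := hHS.prod_fiberwise (fun m => hfiberm m)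
  rw [hSval] at hT
  exact hT
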